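/- Suppose the per-iteration oracle cost is oc(α) = c₀ + c₁/(min{τ, κ·α})² for constants c₀, c₁ ≥ 0, κ > 0, and τ ≥ κ·ᾱ, and that μ(T > n) ≤ η for some real η ∈ [0,1] and integer n ≥ 2. Let ω > 0 and 0 < β ≤ 1/2, and suppose γ ≥ max{ 1/2, (1/(2q))^{log(2β)/((1+ω)·log n)} }. Then with probability at least 1 − η − n^{−ω} − c·n^{−(1+ω)}, we have T ≤ n and TOC(T) ≤ n · ( c₀ + c₁/(κ·β·ᾱ)² ). -/

import Mathlib

open MeasureTheory ProbabilityTheory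

noncomputable section SASSAux

variable {Ω : Type*}

/-- Down event (in step-size): `A` shrinks by factor `γ`. -/
def sassD (A : ℕ → Ω → ℝ) (γ : ℝ) (t : ℕ) : Set Ω := {x | A (t+1) x = γ * A t x}

/-- Up event: `A` grows (capped at `αmax`). -/
def sassU (A : ℕ → Ω → ℝ) (γ αmax : ℝ) (t : ℕ) : Set Ω :=
  {x | A (t+1) x = min αmax (γ⁻¹ * A t x)}

/-- State set of the killed walk started at time `s` at level `0`. -/
def sassH (A : ℕ → Ω → ℝ) (T : Ω → ℕ) (γ ᾱ αmax : ℝ) (L s : ℕ) : ℕ → ℕ → Set Ω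
  | 0, i => if i = 0 then {x | A s x = ᾱ ∧ s ≤ T x} else ∅
  | d+1, i =>
    if 1 ≤ i ∧ i + 1 ≤ L then
      ((sassH A T γ ᾱ αmax L s d (i-1) ∩ sassD A γ (s+d)) ∪
        (sassH A T γ ᾱ αmax L s d (i+1) ∩ sassU A γ αmax (s+d))) ∩ {x | s + d < T x}
    else ∅

/-- Absorption set: walk has hit level `L`. -/
def sassK (A : ℕ → Ω → ℝ) (T : Ω → ℕ) (γ ᾱ αmax : ℝ) (L s : ℕ) : ℕ → Set Ω
  | 0 => ∅
  | d+1 => sassK A T γ ᾱ αmax L s d ∪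
      ((sassH A T γ ᾱ αmax L s d (L-1) ∩ sassD A γ (s+d)) ∩ {x | s + d < T x})

variable {γ ᾱ αmax : ℝ} {j' : ℤ} {A : ℕ → Ω → ℝ} {T : Ω → ℕ} {L s : ℕ}

lemma sass_grid_inj (hγ0 : 0 < γ) (hγ1 : γ < 1) (hᾱ : 0 < ᾱ) {a b : ℤ}
    (h : ᾱ * γ ^ a = ᾱ * γ ^ b) : a = b :=
  (zpow_right_strictAnti₀ hγ0 hγ1).injective (mul_left_cancel₀ hᾱ.ne' h)

lemma sass_min_eq (hγ0 : 0 < γ) (hγ1 : γ < 1) (hᾱ : 0 < ᾱ)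
    (hαmax : αmax = ᾱ * γ ^ j') (m : ℤ) :
    min αmax (γ⁻¹ * (ᾱ * γ ^ m)) = ᾱ * γ ^ (max j' (m - 1)) := by
  have hγne : γ ≠ 0 := ne_of_gt hγ0
  have h1 : γ⁻¹ * (ᾱ * γ ^ m) = ᾱ * γ ^ (m - 1) := by
    rw [zpow_sub_one₀ hγne]; ring
  have anti := (zpow_right_strictAnti₀ hγ0 hγ1).antitone
  rw [hαmax, h1]
  rcases le_total j' (m-1) with h | h
  · rw [max_eq_right h, min_eq_right (mul_le_mul_of_nonneg_left (anti h) hᾱ.le)]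
  · rw [max_eq_left h, min_eq_left (mul_le_mul_of_nonneg_left (anti h) hᾱ.le)]

lemma sassH_val (hγ0 : 0 < γ) (hγ1 : γ < 1) (hᾱ : 0 < ᾱ) (hj' : j' ≤ 0)
    (hαmax : αmax = ᾱ * γ ^ j') :
    ∀ d i, ∀ x ∈ sassH A T γ ᾱ αmax L s d i, A (s+d) x = ᾱ * γ ^ (i:ℤ) := by
  intro d
  induction d with
  | zero =>
    intro i x hx
    by_cases hi : i = 0
    · subst hi
      simp only [sassH, if_pos rfl, Set.mem_setOf_eq] at hx
      simpa using hx.1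
    · simp only [sassH, if_neg hi] at hx
      exact absurd hx (Set.notMem_empty x)
  | succ d ih =>
    intro i x hx
    simp only [sassH] at hx
    by_cases hcond : 1 ≤ i ∧ i + 1 ≤ L
    · rw [if_pos hcond] at hx
      have hadd : s + (d+1) = (s+d) + 1 := rfl
      rcases hx.1 with ⟨hH, hD⟩ | ⟨hH, hU⟩
      · have hv := ih (i-1) x hH
        have hcast : ((i-1 : ℕ) : ℤ) = (i:ℤ) - 1 := by
          have := hcond.1; push_cast [Nat.cast_sub this]; ring
        have hD' : A ((s+d)+1) x = γ * A (s+d) x := hD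
        rw [hadd]
        rw [hD', hv, hcast]
        rw [show (i:ℤ) = ((i:ℤ) - 1) + 1 by ring, zpow_add_one₀ (ne_of_gt hγ0)]
        ring
      · have hv := ih (i+1) x hH
        have hU' : A ((s+d)+1) x = min αmax (γ⁻¹ * A (s+d) x) := hU
        rw [hadd, hU', hv]
        rw [sass_min_eq hγ0 hγ1 hᾱ hαmax]
        congr 2
        push_cast
        rw [max_eq_right]
        · ring
        · have := hcond.1
          have : (1:ℤ) ≤ (i:ℤ) := by exact_mod_cast this
          omega
    · rw [if_neg hcond] at hx
      exact absurd hx (Set.notMem_empty x)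

lemma sassH_top (hL : 1 ≤ L) : ∀ d, sassH A T γ ᾱ αmax L s d L = ∅ := by
  intro d
  cases d with
  | zero => simp only [sassH, if_neg (by omega : ¬ L = 0)]
  | succ d => simp only [sassH, if_neg (by omega : ¬ (1 ≤ L ∧ L + 1 ≤ L))]

lemma sassK_mono {d d' : ℕ} (h : d ≤ d') :
    sassK A T γ ᾱ αmax L s d ⊆ sassK A T γ ᾱ αmax L s d' := by
  induction d' with
  | zero =>
    have : d = 0 := by omega
    subst this; exact subset_rfl
  | succ d' ih =>
    rcases Nat.eq_or_lt_of_le h with h' | h'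
    · subst h'; exact subset_rfl
    · exact (ih (by omega)).trans Set.subset_union_left

end SASSAux

section SASSMeas

variable {Ω : Type*} {mΩ : MeasurableSpace Ω}
variable {γ ᾱ αmax : ℝ} {A : ℕ → Ω → ℝ} {T : Ω → ℕ} {L s : ℕ}

lemma sass_A_meas (F : Filtration ℕ mΩ) (hadp : Adapted F A) {r t : ℕ} (h : r ≤ t) :
    Measurable[F t] (A r) :=
  Measurable.mono (hadp r) (F.mono h) le_rfl

lemma sass_T_lt_meas (F : Filtration ℕ mΩ) (hT : IsStoppingTime F (fun x => (T x : WithTop ℕ))) (t : ℕ) :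
    MeasurableSet[F t] {x | t < T x} := by
  have h : MeasurableSet[F t] {x | ((T x : WithTop ℕ)) ≤ (t : WithTop ℕ)}ᶜ := (hT t).compl
  have : {x | ((T x : WithTop ℕ)) ≤ (t : WithTop ℕ)}ᶜ = {x | t < T x} := by
    ext x; simp [not_le]
  rwa [this] at h

lemma sass_T_le_meas (F : Filtration ℕ mΩ) (hT : IsStoppingTime F (fun x => (T x : WithTop ℕ))) (t : ℕ) :
    MeasurableSet[F t] {x | t ≤ T x} := by
  cases t with
  | zero => simp
  | succ t =>
    have h := sass_T_lt_meas F hT t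
    have heq : ({x | t < T x} : Set Ω) = {x | t + 1 ≤ T x} := by ext x; exact Iff.rfl
    rw [heq] at h
    exact (F.mono t.le_succ) _ h

lemma sassD_meas (F : Filtration ℕ mΩ) (hadp : Adapted F A) (t : ℕ) :
    MeasurableSet[F (t+1)] (sassD A γ t) :=
  measurableSet_eq_fun (sass_A_meas F hadp le_rfl) (measurable_const.mul (sass_A_meas F hadp t.le_succ))

lemma sassU_meas (F : Filtration ℕ mΩ) (hadp : Adapted F A) (t : ℕ) :
    MeasurableSet[F (t+1)] (sassU A γ αmax t) :=
  measurableSet_eq_fun (sass_A_meas F hadp le_rfl)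
    (measurable_const.min (measurable_const.mul (sass_A_meas F hadp t.le_succ)))

lemma sassH_meas (F : Filtration ℕ mΩ) (hadp : Adapted F A) (hT : IsStoppingTime F (fun x => (T x : WithTop ℕ))) :
    ∀ d i, MeasurableSet[F (s+d)] (sassH A T γ ᾱ αmax L s d i) := by
  intro d
  induction d with
  | zero =>
    intro i
    by_cases hi : i = 0
    · subst hi
      simp only [sassH, if_pos rfl]
      have h1 : MeasurableSet[F s] {x | A s x = ᾱ} :=
        measurableSet_eq_fun (sass_A_meas F hadp le_rfl) measurable_const
      have h2 := sass_T_le_meas F hT s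
      have : {x | A s x = ᾱ ∧ s ≤ T x} = {x | A s x = ᾱ} ∩ {x | s ≤ T x} := rfl
      rw [this]
      exact h1.inter h2
    · simp only [sassH, if_neg hi]
      exact @MeasurableSet.empty _ (F (s+0))
  | succ d ih =>
    intro i
    simp only [sassH]
    split_ifs with h
    · have hmono : F (s+d) ≤ F (s+d+1) := F.mono (Nat.le_succ _)
      refine MeasurableSet.inter ?_ (hmono _ (sass_T_lt_meas F hT (s+d)))
      refine MeasurableSet.union ?_ ?_
      · exact (hmono _ (ih (i-1))).inter (sassD_meas F hadp (s+d))
      · exact (hmono _ (ih (i+1))).inter (sassU_meas F hadp (s+d))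
    · exact @MeasurableSet.empty _ (F (s+(d+1)))

lemma sassH_meas' (F : Filtration ℕ mΩ) (hadp : Adapted F A) (hT : IsStoppingTime F (fun x => (T x : WithTop ℕ)))
    (d i : ℕ) : MeasurableSet (sassH A T γ ᾱ αmax L s d i) :=
  (F.le (s+d)) _ (sassH_meas F hadp hT d i)

lemma sassK_meas (F : Filtration ℕ mΩ) (hadp : Adapted F A) (hT : IsStoppingTime F (fun x => (T x : WithTop ℕ))) :
    ∀ d, MeasurableSet (sassK A T γ ᾱ αmax L s d) := by
  intro d
  induction d with
  | zero => simp only [sassK]; exact MeasurableSet.empty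
  | succ d ih =>
    simp only [sassK]
    refine ih.union (MeasurableSet.inter (MeasurableSet.inter ?_ ?_) ?_)
    · exact sassH_meas' F hadp hT d (L-1)
    · exact (F.le (s+d+1)) _ (sassD_meas F hadp (s+d))
    · exact (F.le (s+d)) _ (sass_T_lt_meas F hT (s+d))

end SASSMeas

section SASSProb

variable {Ω : Type*} {mΩ : MeasurableSpace Ω}

/-- The conditional drift inequality in integrated form. -/
lemma sass_drift (μ : Measure Ω) [IsProbabilityMeasure μ] (F : Filtration ℕ mΩ)
    {γ ᾱ αmax p : ℝ} {A : ℕ → Ω → ℝ} {T : Ω → ℕ}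
    (hadp : Adapted F A)
    (hcond : ∀ k, ∀ᵐ x ∂μ, (k < T x ∧ A k x ≤ ᾱ) →
      p ≤ (μ[Set.indicator {x' | A (k+1) x' = min αmax (γ⁻¹ * A k x')}
              (fun _ => (1:ℝ)) | F k]) x)
    (k : ℕ) (S : Set Ω) (hSm : MeasurableSet[F k] S)
    (hsub : ∀ x ∈ S, k < T x ∧ A k x ≤ ᾱ) :
    p * (μ S).toReal ≤ (μ (S ∩ sassU A γ αmax k)).toReal := by
  have hAm : ∀ t, Measurable (A t) := fun t => Measurable.mono (hadp t) (F.le t) le_rfl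
  have hUm : MeasurableSet (sassU A γ αmax k) :=
    measurableSet_eq_fun (hAm (k+1)) (measurable_const.min (measurable_const.mul (hAm k)))
  have hSm0 : MeasurableSet S := F.le k S hSm
  have hsetU : {x' | A (k+1) x' = min αmax (γ⁻¹ * A k x')} = sassU A γ αmax k := rfl
  set f := Set.indicator (sassU A γ αmax k) (fun _ => (1:ℝ)) with hf
  have hfInt : Integrable f μ := (integrable_const (1:ℝ)).indicator hUm
  have h2 : ∫ x in S, (μ[f | F k]) x ∂μ = ∫ x in S, f x ∂μ :=
    setIntegral_condExp (F.le k) hfInt hSm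
  have h3 : p * (μ S).toReal ≤ ∫ x in S, (μ[f | F k]) x ∂μ := by
    have hae : ∀ᵐ x ∂(μ.restrict S), p ≤ (μ[f | F k]) x := by
      have h4 := ae_restrict_of_ae (μ := μ) (s := S) (hcond k)
      have h5 : ∀ᵐ x ∂(μ.restrict S), x ∈ S := ae_restrict_mem hSm0
      filter_upwards [h4, h5] with x hx hxS
      have := hx (hsub x hxS)
      rwa [hsetU] at this
    have h6 : ∫ x in S, p ∂μ ≤ ∫ x in S, (μ[f | F k]) x ∂μ := by
      refine integral_mono_ae (integrable_const p) integrable_condExp.integrableOn hae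
    have h7 : ∫ x in S, p ∂μ = p * (μ S).toReal := by
      rw [setIntegral_const, smul_eq_mul, mul_comm]
      rfl
    linarith [h6, h7.symm.le, h7.le]
  have h6 : ∫ x in S, f x ∂μ = (μ (S ∩ sassU A γ αmax k)).toReal := by
    rw [hf, setIntegral_indicator hUm]
    simp
    rfl
  linarith [h3, h2.le, h2.ge, h6.le, h6.ge]


/-- Pure algebra of the one-step supermartingale inequality. -/
lemma sass_alg {p q : ℝ} (hp : 1/2 < p) (hp1 : p < 1) (hq : q = 1 - p)
    (L' : ℕ) (mnew md mu mh mold : ℕ → ℝ) (k0 : ℝ)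
    (hnnnew : ∀ i, 0 ≤ mnew i) (hnnmd : ∀ i, 0 ≤ md i) (hnnmu : ∀ i, 0 ≤ mu i)
    (hnnmh : ∀ i, 0 ≤ mh i)
    (hk0 : 0 ≤ k0)
    (hnew0 : mnew 0 = 0)
    (hnew : ∀ i, i < L' → mnew (i+1) ≤ md i + mu (i+2))
    (hdrift : ∀ i, p * mh i ≤ mu i)
    (hdu : ∀ i, md i + mu i ≤ mh i)
    (hold : ∀ i, mh i ≤ mold i)
    (htop : mu (L'+1) = 0) :
    (∑ i ∈ Finset.range (L'+1), (p/q)^i * mnew i) + (p/q)^(L'+1) * (k0 + md L')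
      ≤ (∑ i ∈ Finset.range (L'+1), (p/q)^i * mold i) + (p/q)^(L'+1) * k0 := by
  have hq0 : 0 < q := by rw [hq]; linarith
  have hp0 : 0 < p := by linarith
  have hr0 : 0 < p / q := div_pos hp0 hq0
  have hqp : q < p := by rw [hq]; linarith
  have hpq2 : (0:ℝ) ≤ p^2 - q^2 := by nlinarith
  -- key per-index inequality
  have hkey : ∀ i, (p/q)^(i+1) * md i + ((p/q)^i / (p/q)) * mu i ≤ (p/q)^i * mh i := by
    intro i
    have hinner : (p/q) * md i + (q/p) * mu i ≤ mh i := by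
      have hmul : q * p * ((p/q) * md i + (q/p) * mu i) = p^2 * md i + q^2 * mu i := by
        field_simp
      have h2 : p^2 * md i + q^2 * mu i ≤ q * p * mh i := by
        have ha := mul_nonneg (sub_nonneg.mpr (hdu i)) (sq_nonneg p)
        have hb := mul_nonneg (sub_nonneg.mpr (hdrift i)) hpq2
        have hz : 1 - (p + q) = 0 := by rw [hq]; ring
        have hid : q*p*mh i - (p^2*md i + q^2*mu i)
            = (mh i - (md i + mu i))*p^2 + (mu i - p*mh i)*(p^2-q^2)
              + mh i * p * (q-p) * (1-(p+q)) := by ring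
        rw [hz] at hid
        linarith [ha, hb, hid]
      have h3 : q * p * ((p/q) * md i + (q/p) * mu i) ≤ q * p * mh i := by
        rw [hmul]; exact h2
      exact le_of_mul_le_mul_left h3 (mul_pos hq0 hp0)
    have hfac : (p/q)^(i+1) * md i + ((p/q)^i / (p/q)) * mu i
        = (p/q)^i * ((p/q) * md i + (q/p) * mu i) := by
      rw [pow_succ]
      have : (p/q)⁻¹ = q/p := by rw [inv_div]
      field_simp
    rw [hfac]
    exact mul_le_mul_of_nonneg_left hinner (pow_nonneg hr0.le i)
  -- sum manipulations
  have hS1 : (∑ i ∈ Finset.range (L'+1), (p/q)^i * mnew i)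
      = ∑ i ∈ Finset.range L', (p/q)^(i+1) * mnew (i+1) := by
    rw [Finset.sum_range_succ']
    simp [hnew0]
  have hS2 : (∑ i ∈ Finset.range L', (p/q)^(i+1) * mnew (i+1))
      ≤ ∑ i ∈ Finset.range L',
          ((p/q)^(i+1) * md i + ((p/q)^(i+2)/(p/q)) * mu (i+2)) := by
    apply Finset.sum_le_sum
    intro i hi
    have hpw : (p/q)^(i+2)/(p/q) = (p/q)^(i+1) := by
      rw [pow_succ, mul_div_assoc, div_self (ne_of_gt hr0), mul_one]
    rw [hpw]
    calc (p/q)^(i+1) * mnew (i+1) ≤ (p/q)^(i+1) * (md i + mu (i+2)) :=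
          mul_le_mul_of_nonneg_left (hnew i (Finset.mem_range.mp hi)) (by positivity)
    _ = (p/q)^(i+1)*md i + (p/q)^(i+1)*mu (i+2) := by ring
  have hS3 : ∑ i ∈ Finset.range L',
      ((p/q)^(i+1) * md i + ((p/q)^(i+2)/(p/q)) * mu (i+2))
      = (∑ i ∈ Finset.range L', (p/q)^(i+1) * md i)
        + ∑ i ∈ Finset.range L', ((p/q)^(i+2)/(p/q)) * mu (i+2) :=
    Finset.sum_add_distrib
  -- md part
  have hMD : (∑ i ∈ Finset.range L', (p/q)^(i+1) * md i) + (p/q)^(L'+1) * md L'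
      = ∑ i ∈ Finset.range (L'+1), (p/q)^(i+1) * md i :=
    (Finset.sum_range_succ (fun i => (p/q)^(i+1) * md i) L').symm
  -- mu part
  have hφnn : ∀ j, 0 ≤ ((p/q)^j/(p/q)) * mu j := fun j => mul_nonneg (by positivity) (hnnmu j)
  have hMU : (∑ i ∈ Finset.range L', ((p/q)^(i+2)/(p/q)) * mu (i+2))
      ≤ ∑ j ∈ Finset.range (L'+1), ((p/q)^j/(p/q)) * mu j := by
    have e1 : ∑ j ∈ Finset.range (L'+2), ((p/q)^j/(p/q)) * mu j
        = (∑ i ∈ Finset.range (L'+1), ((p/q)^(i+1)/(p/q)) * mu (i+1))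
          + ((p/q)^0/(p/q)) * mu 0 :=
      Finset.sum_range_succ' (fun j => ((p/q)^j/(p/q)) * mu j) (L'+1)
    have e2 : ∑ i ∈ Finset.range (L'+1), ((p/q)^(i+1)/(p/q)) * mu (i+1)
        = (∑ i ∈ Finset.range L', ((p/q)^(i+2)/(p/q)) * mu (i+2))
          + ((p/q)^1/(p/q)) * mu 1 :=
      Finset.sum_range_succ' (fun i => ((p/q)^(i+1)/(p/q)) * mu (i+1)) L'
    have e3 : ∑ j ∈ Finset.range (L'+2), ((p/q)^j/(p/q)) * mu j
        = (∑ j ∈ Finset.range (L'+1), ((p/q)^j/(p/q)) * mu j)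
          + ((p/q)^(L'+1)/(p/q)) * mu (L'+1) :=
      Finset.sum_range_succ (fun j => ((p/q)^j/(p/q)) * mu j) (L'+1)
    have e4 : ((p/q)^(L'+1)/(p/q)) * mu (L'+1) = 0 := by rw [htop, mul_zero]
    have := hφnn 0
    have := hφnn 1
    linarith [e1, e2, e3]
  -- combine
  have hTOT : (∑ i ∈ Finset.range (L'+1), (p/q)^i * mnew i) + (p/q)^(L'+1) * md L'
      ≤ ∑ i ∈ Finset.range (L'+1),
          ((p/q)^(i+1) * md i + ((p/q)^i/(p/q)) * mu i) := by
    rw [Finset.sum_add_distrib, hS1]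
    have := hS2.trans (le_of_eq hS3)
    linarith [hMU, hMD.symm.le, hMD.le]
  have hFIN : ∑ i ∈ Finset.range (L'+1),
      ((p/q)^(i+1) * md i + ((p/q)^i/(p/q)) * mu i)
      ≤ ∑ i ∈ Finset.range (L'+1), (p/q)^i * mold i := by
    apply Finset.sum_le_sum
    intro i _
    exact (hkey i).trans (mul_le_mul_of_nonneg_left ((hold i)) (by positivity))
  nlinarith [hTOT, hFIN]

/-- The supermartingale potential bound. -/
lemma sass_pot (μ : Measure Ω) [IsProbabilityMeasure μ] (F : Filtration ℕ mΩ)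
    {γ ᾱ αmax p q : ℝ} {j' : ℤ} {A : ℕ → Ω → ℝ} {T : Ω → ℕ}
    (hγ0 : 0 < γ) (hγ1 : γ < 1) (hᾱ : 0 < ᾱ)
    (hp : 1/2 < p) (hp1 : p < 1) (hq : q = 1 - p)
    (hj' : j' ≤ 0) (hαmax : αmax = ᾱ * γ ^ j')
    (hadp : Adapted F A) (hT : IsStoppingTime F (fun x => (T x : WithTop ℕ)))
    (hcond : ∀ k, ∀ᵐ x ∂μ, (k < T x ∧ A k x ≤ ᾱ) →
      p ≤ (μ[Set.indicator {x' | A (k+1) x' = min αmax (γ⁻¹ * A k x')}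
              (fun _ => (1:ℝ)) | F k]) x)
    (L s : ℕ) (hL : 1 ≤ L) :
    ∀ d, (∑ i ∈ Finset.range L, (p/q)^i * (μ (sassH A T γ ᾱ αmax L s d i)).toReal)
        + (p/q)^L * (μ (sassK A T γ ᾱ αmax L s d)).toReal ≤ 1 := by
  have hq0 : 0 < q := by rw [hq]; linarith
  have hp0 : 0 < p := by linarith
  have hr0 : 0 < p/q := div_pos hp0 hq0
  have hfin : ∀ S : Set Ω, μ S ≠ ⊤ := fun S => measure_ne_top μ S
  have hmono : ∀ S S' : Set Ω, S ⊆ S' → (μ S).toReal ≤ (μ S').toReal := fun S S' h =>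
    ENNReal.toReal_mono (hfin S') (measure_mono h)
  have hunion : ∀ S S' : Set Ω, (μ (S ∪ S')).toReal ≤ (μ S).toReal + (μ S').toReal := by
    intro S S'
    rw [← ENNReal.toReal_add (hfin S) (hfin S')]
    exact ENNReal.toReal_mono (ENNReal.add_ne_top.mpr ⟨hfin S, hfin S'⟩) (measure_union_le S S')
  intro d
  induction d with
  | zero =>
    have hK : sassK A T γ ᾱ αmax L s 0 = (∅ : Set Ω) := rfl
    rw [hK]
    simp only [measure_empty, ENNReal.toReal_zero, mul_zero, add_zero]
    have hsum : ∑ i ∈ Finset.range L, (p/q)^i * (μ (sassH A T γ ᾱ αmax L s 0 i)).toReal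
        = (p/q)^0 * (μ (sassH A T γ ᾱ αmax L s 0 0)).toReal := by
      apply Finset.sum_eq_single_of_mem 0 (Finset.mem_range.mpr (by omega))
      intro i _ hi
      have hemp : sassH A T γ ᾱ αmax L s 0 i = (∅ : Set Ω) := by
        simp only [sassH, if_neg hi]
      rw [hemp]; simp
    rw [hsum]
    simp only [pow_zero, one_mul]
    calc (μ (sassH A T γ ᾱ αmax L s 0 0)).toReal
        ≤ (μ (Set.univ : Set Ω)).toReal := hmono _ _ (Set.subset_univ _)
      _ = 1 := by simp
  | succ d ih =>
    obtain ⟨L', rfl⟩ : ∃ L', L = L'+1 := ⟨L-1, by omega⟩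
    have hTm : MeasurableSet {x | s + d < T x} := (F.le (s+d)) _ (sass_T_lt_meas F hT (s+d))
    have hUm : MeasurableSet (sassU A γ αmax (s+d)) :=
      (F.le (s+d+1)) _ (sassU_meas F hadp (s+d))
    have hDm : MeasurableSet (sassD A γ (s+d)) :=
      (F.le (s+d+1)) _ (sassD_meas F hadp (s+d))
    -- apply the algebraic lemma
    have halg := sass_alg hp hp1 hq L'
      (fun i => (μ (sassH A T γ ᾱ αmax (L'+1) s (d+1) i)).toReal)
      (fun i => (μ ((sassH A T γ ᾱ αmax (L'+1) s d i ∩ sassD A γ (s+d)) ∩ {x | s + d < T x})).toReal)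
      (fun i => (μ ((sassH A T γ ᾱ αmax (L'+1) s d i ∩ sassU A γ αmax (s+d)) ∩ {x | s + d < T x})).toReal)
      (fun i => (μ (sassH A T γ ᾱ αmax (L'+1) s d i ∩ {x | s + d < T x})).toReal)
      (fun i => (μ (sassH A T γ ᾱ αmax (L'+1) s d i)).toReal)
      ((μ (sassK A T γ ᾱ αmax (L'+1) s d)).toReal)
      (fun i => ENNReal.toReal_nonneg) (fun i => ENNReal.toReal_nonneg)
      (fun i => ENNReal.toReal_nonneg) (fun i => ENNReal.toReal_nonneg)
      ENNReal.toReal_nonneg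
      (by
        have hemp : sassH A T γ ᾱ αmax (L'+1) s (d+1) 0 = (∅ : Set Ω) := by
          simp only [sassH, if_neg (by omega : ¬ (1 ≤ 0 ∧ 0 + 1 ≤ L'+1))]
        simp only [hemp]; simp)
      (by
        intro i hi
        have hset : sassH A T γ ᾱ αmax (L'+1) s (d+1) (i+1) ⊆
            ((sassH A T γ ᾱ αmax (L'+1) s d i ∩ sassD A γ (s+d)) ∩ {x | s + d < T x}) ∪
            ((sassH A T γ ᾱ αmax (L'+1) s d (i+2) ∩ sassU A γ αmax (s+d)) ∩ {x | s + d < T x}) := by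
          intro x hx
          simp only [sassH, if_pos (show 1 ≤ i+1 ∧ (i+1) + 1 ≤ L'+1 by omega)] at hx
          rcases hx.1 with h | h
          · exact Or.inl ⟨h, hx.2⟩
          · exact Or.inr ⟨h, hx.2⟩
        exact (hmono _ _ hset).trans (hunion _ _))
      (by
        intro i
        have hSm : MeasurableSet[F (s+d)]
            (sassH A T γ ᾱ αmax (L'+1) s d i ∩ {x | s + d < T x}) :=
          (sassH_meas F hadp hT d i).inter (sass_T_lt_meas F hT (s+d))
        have hsub : ∀ x ∈ sassH A T γ ᾱ αmax (L'+1) s d i ∩ {x | s + d < T x},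
            s + d < T x ∧ A (s+d) x ≤ ᾱ := by
          intro x hx
          refine ⟨hx.2, ?_⟩
          have hv := sassH_val hγ0 hγ1 hᾱ hj' hαmax d i x hx.1
          rw [hv]
          have h1 : γ ^ (i:ℤ) ≤ 1 := by
            calc γ ^ (i:ℤ) ≤ γ ^ (0:ℤ) :=
                  (zpow_right_strictAnti₀ hγ0 hγ1).antitone (Int.ofNat_nonneg i)
              _ = 1 := zpow_zero γ
          nlinarith [hᾱ.le]
        have h := sass_drift μ F hadp hcond (s+d)
          (sassH A T γ ᾱ αmax (L'+1) s d i ∩ {x | s + d < T x}) hSm hsub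
        have hseteq : (sassH A T γ ᾱ αmax (L'+1) s d i ∩ {x | s + d < T x})
            ∩ sassU A γ αmax (s+d)
            = (sassH A T γ ᾱ αmax (L'+1) s d i ∩ sassU A γ αmax (s+d)) ∩ {x | s + d < T x} :=
          Set.inter_right_comm _ _ _
        rw [hseteq] at h
        exact h)
      (by
        intro i
        have hdisj : Disjoint
            ((sassH A T γ ᾱ αmax (L'+1) s d i ∩ sassD A γ (s+d)) ∩ {x | s + d < T x})
            ((sassH A T γ ᾱ αmax (L'+1) s d i ∩ sassU A γ αmax (s+d)) ∩ {x | s + d < T x}) := by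
          rw [Set.disjoint_left]
          rintro x ⟨⟨hxH, hxD⟩, -⟩ ⟨⟨-, hxU⟩, -⟩
          have hv := sassH_val hγ0 hγ1 hᾱ hj' hαmax d i x hxH
          have h1 : A ((s+d)+1) x = γ * A (s+d) x := hxD
          have h2 : A ((s+d)+1) x = min αmax (γ⁻¹ * A (s+d) x) := hxU
          rw [hv] at h1 h2
          rw [sass_min_eq hγ0 hγ1 hᾱ hαmax] at h2
          have h3 : γ * (ᾱ * γ^(i:ℤ)) = ᾱ * γ^((i:ℤ)+1) := by
            rw [zpow_add_one₀ (ne_of_gt hγ0)]; ring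
          rw [h3] at h1
          have heq := sass_grid_inj hγ0 hγ1 hᾱ (h1.symm.trans h2)
          have hle : max j' ((i:ℤ)-1) ≤ (i:ℤ) :=
            max_le (le_trans hj' (Int.ofNat_nonneg i)) (by omega)
          omega
        have hmeas2 : MeasurableSet
            ((sassH A T γ ᾱ αmax (L'+1) s d i ∩ sassU A γ αmax (s+d)) ∩ {x | s + d < T x}) :=
          ((sassH_meas' F hadp hT d i).inter hUm).inter hTm
        have hadd : (μ (((sassH A T γ ᾱ αmax (L'+1) s d i ∩ sassD A γ (s+d)) ∩ {x | s + d < T x})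
              ∪ ((sassH A T γ ᾱ αmax (L'+1) s d i ∩ sassU A γ αmax (s+d)) ∩ {x | s + d < T x}))).toReal
            = (μ ((sassH A T γ ᾱ αmax (L'+1) s d i ∩ sassD A γ (s+d)) ∩ {x | s + d < T x})).toReal
              + (μ ((sassH A T γ ᾱ αmax (L'+1) s d i ∩ sassU A γ αmax (s+d)) ∩ {x | s + d < T x})).toReal := by
          rw [measure_union hdisj hmeas2, ENNReal.toReal_add (hfin _) (hfin _)]
        rw [← hadd]
        apply hmono
        intro x hx
        rcases hx with h | h
        · exact ⟨h.1.1, h.2⟩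
        · exact ⟨h.1.1, h.2⟩)
      (fun i => hmono _ _ Set.inter_subset_left)
      (by
        have hemp : sassH A T γ ᾱ αmax (L'+1) s d (L'+1) = (∅ : Set Ω) :=
          sassH_top hL d
        simp only [hemp, Set.empty_inter, measure_empty, ENNReal.toReal_zero])
    -- put things together
    have hK : (μ (sassK A T γ ᾱ αmax (L'+1) s (d+1))).toReal
        ≤ (μ (sassK A T γ ᾱ αmax (L'+1) s d)).toReal
          + (μ ((sassH A T γ ᾱ αmax (L'+1) s d L' ∩ sassD A γ (s+d)) ∩ {x | s + d < T x})).toReal := by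
      have hKeq : sassK A T γ ᾱ αmax (L'+1) s (d+1)
          = sassK A T γ ᾱ αmax (L'+1) s d ∪
            ((sassH A T γ ᾱ αmax (L'+1) s d L' ∩ sassD A γ (s+d)) ∩ {x | s + d < T x}) := rfl
      rw [hKeq]
      exact hunion _ _
    have h5 := mul_le_mul_of_nonneg_left hK (pow_nonneg hr0.le (L'+1))
    calc (∑ i ∈ Finset.range (L'+1), (p/q)^i * (μ (sassH A T γ ᾱ αmax (L'+1) s (d+1) i)).toReal)
          + (p/q)^(L'+1) * (μ (sassK A T γ ᾱ αmax (L'+1) s (d+1))).toReal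
        ≤ (∑ i ∈ Finset.range (L'+1), (p/q)^i * (μ (sassH A T γ ᾱ αmax (L'+1) s (d+1) i)).toReal)
          + (p/q)^(L'+1) * ((μ (sassK A T γ ᾱ αmax (L'+1) s d)).toReal
            + (μ ((sassH A T γ ᾱ αmax (L'+1) s d L' ∩ sassD A γ (s+d)) ∩ {x | s + d < T x})).toReal) := by
          linarith [h5]
      _ ≤ (∑ i ∈ Finset.range (L'+1), (p/q)^i * (μ (sassH A T γ ᾱ αmax (L'+1) s d i)).toReal)
          + (p/q)^(L'+1) * (μ (sassK A T γ ᾱ αmax (L'+1) s d)).toReal := halg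
      _ ≤ 1 := ih

end SASSProb

section SASSRecon

variable {Ω : Type*}
variable {γ ᾱ αmax β : ℝ} {j j' : ℤ} {A : ℕ → Ω → ℝ} {T : Ω → ℕ} {L n : ℕ}

lemma sass_recon (hγ0 : 0 < γ) (hγ1 : γ < 1) (hᾱ : 0 < ᾱ) (hj' : j' ≤ 0)
    (hαmax : αmax = ᾱ * γ ^ j') (hβ0 : 0 < β) (hL : 1 ≤ L)
    (hLβ : ∀ m : ℤ, m < (L:ℤ) → β ≤ γ ^ m)
    (x : Ω) (hsteps : ∀ t, A (t+1) x = γ * A t x ∨ A (t+1) x = min αmax (γ⁻¹ * A t x))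
    (hj : j ≤ 0) (hA0x : A 0 x = ᾱ * γ ^ j)
    (k : ℕ) (hk1 : 1 ≤ k) (hkn : k ≤ n) (hkT : k ≤ T x) (hAk : A k x < β * ᾱ) :
    ∃ s, s < n ∧ x ∈ sassK A T γ ᾱ αmax L s (n - s) := by
  have hγne : γ ≠ 0 := ne_of_gt hγ0
  -- the exponent process
  have hex : ∀ t : ℕ, ∃ m : ℤ, A t x = ᾱ * γ ^ m := by
    intro t
    induction t with
    | zero => exact ⟨j, hA0x⟩
    | succ t ih =>
      obtain ⟨m, hm⟩ := ih
      rcases hsteps t with h | h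
      · refine ⟨m + 1, ?_⟩
        rw [h, hm, zpow_add_one₀ hγne]; ring
      · refine ⟨max j' (m - 1), ?_⟩
        rw [h, hm, sass_min_eq hγ0 hγ1 hᾱ hαmax]
  choose I hI using hex
  have hinj : ∀ a b : ℤ, ᾱ * γ ^ a = ᾱ * γ ^ b → a = b := fun a b h =>
    sass_grid_inj hγ0 hγ1 hᾱ h
  have hstepI : ∀ t, (I (t+1) = I t + 1 ∧ A (t+1) x = γ * A t x) ∨
      (I (t+1) = max j' (I t - 1) ∧ A (t+1) x = min αmax (γ⁻¹ * A t x)) := by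
    intro t
    rcases hsteps t with h | h
    · refine Or.inl ⟨?_, h⟩
      apply hinj
      rw [← hI (t+1), h, hI t, zpow_add_one₀ hγne]; ring
    · refine Or.inr ⟨?_, h⟩
      apply hinj
      rw [← hI (t+1), h, hI t, sass_min_eq hγ0 hγ1 hᾱ hαmax]
  have hI0 : I 0 = j := hinj _ _ (by rw [← hI 0, hA0x])
  have hIk : (L:ℤ) ≤ I k := by
    by_contra h
    push_neg at h
    have h1 := hLβ (I k) h
    have h2 := mul_le_mul_of_nonneg_right h1 hᾱ.le
    rw [hI k] at hAk
    nlinarith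
  -- first passage time e
  have hexe : ∃ t, (L:ℤ) ≤ I t := ⟨k, hIk⟩
  have heL : (L:ℤ) ≤ I (Nat.find hexe) := Nat.find_spec hexe
  have hemin : ∀ t, t < Nat.find hexe → I t < L := fun t ht =>
    lt_of_not_ge (Nat.find_min hexe ht)
  have hek : Nat.find hexe ≤ k := Nat.find_min' hexe hIk
  have he1 : 1 ≤ Nat.find hexe := by
    rcases Nat.eq_zero_or_pos (Nat.find hexe) with h | h
    · exfalso
      have := heL
      rw [h, hI0] at this
      omega
    · exact h
  obtain ⟨e', he'⟩ : ∃ e', Nat.find hexe = e' + 1 := ⟨Nat.find hexe - 1, by omega⟩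
  rw [he'] at heL hek
  have hemin' : ∀ t, t ≤ e' → I t < L := fun t ht => by
    have := hemin t (by omega)
    exact this
  have hIe' : I e' < L := hemin' e' le_rfl
  -- the step into e is a down (γ) step
  have hstepe : I (e'+1) = I e' + 1 ∧ A (e'+1) x = γ * A e' x := by
    rcases hstepI e' with h | ⟨hi, _⟩
    · exact h
    · exfalso
      have h2 : I (e'+1) ≤ max j' (I e' - 1) := le_of_eq hi
      have h3 : max j' (I e' - 1) ≤ (L:ℤ) - 1 := by
        apply max_le
        · omega
        · omega
      omega
  have hIe1 : I (e'+1) = L := by omega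
  have hIe'val : I e' = (L:ℤ) - 1 := by omega
  -- last exit time s from level ≤ 0
  set P : ℕ → Prop := fun t => I t ≤ 0 with hP
  have hP0 : P 0 := by rw [hP]; simp only []; rw [hI0]; exact hj
  set s := Nat.findGreatest P e' with hs
  have hs_le : s ≤ e' := Nat.findGreatest_le e'
  have hsP : I s ≤ 0 := Nat.findGreatest_spec (Nat.zero_le e') hP0
  have hsmax : ∀ t, s < t → t ≤ e' → 1 ≤ I t := by
    intro t h1 h2
    have := Nat.findGreatest_is_greatest (n := e') (P := P) h1 h2
    simp only [hP, not_le] at this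
    omega
  have hs1 : 1 ≤ I (s+1) := by
    by_cases h : s + 1 ≤ e'
    · exact hsmax _ (by omega) h
    · have hse : s = e' := by omega
      rw [hse, hIe1]
      omega
  have hs0 : I s = 0 := by
    rcases hstepI s with ⟨hi, _⟩ | ⟨hi, _⟩
    · omega
    · exfalso
      have h3 : max j' (I s - 1) ≤ 0 := max_le hj' (by omega)
      omega
  -- the membership chain
  have chain : ∀ d, s + d ≤ e' → x ∈ sassH A T γ ᾱ αmax L s d (I (s+d)).toNat := by
    intro d
    induction d with
    | zero =>
      intro _
      have : (I (s+0)).toNat = 0 := by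
        simp only [Nat.add_zero]; omega
      rw [this]
      simp only [sassH, if_pos rfl, Set.mem_setOf_eq]
      constructor
      · rw [hI s]
        rw [hs0]
        simp
      · calc s ≤ k := by omega
          _ ≤ T x := hkT
    | succ d ih =>
      intro hd
      have hd' : s + d ≤ e' := by omega
      have hmem := ih hd'
      have h1le : 1 ≤ I (s+d+1) := hsmax _ (by omega) hd
      have hlt : I (s+d+1) < L := hemin' _ hd
      have hTbd : s + d < T x := by
        have : s + d + 1 ≤ k := by omega
        omega
      have hcnd : 1 ≤ (I (s+d+1)).toNat ∧ (I (s+d+1)).toNat + 1 ≤ L := by omega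
      have hrw : sassH A T γ ᾱ αmax L s (d+1) ((I (s+d+1)).toNat)
          = ((sassH A T γ ᾱ αmax L s d ((I (s+d+1)).toNat - 1) ∩ sassD A γ (s+d)) ∪
             (sassH A T γ ᾱ αmax L s d ((I (s+d+1)).toNat + 1) ∩ sassU A γ αmax (s+d)))
            ∩ {x | s + d < T x} := by
        simp only [sassH]
        rw [if_pos hcnd]
      rw [show s + (d+1) = s + d + 1 from rfl, hrw]
      refine ⟨?_, hTbd⟩
      rcases hstepI (s+d) with ⟨hi, hA⟩ | ⟨hi, hA⟩
      · left
        have heq : (I (s+d+1)).toNat - 1 = (I (s+d)).toNat := by omega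
        rw [heq]
        exact ⟨hmem, hA⟩
      · right
        have hval : I (s+d+1) = I (s+d) - 1 := by
          rcases le_total j' (I (s+d) - 1) with h | h
          · rw [hi, max_eq_right h]
          · exfalso
            rw [hi, max_eq_left h] at h1le
            omega
        have heq : (I (s+d+1)).toNat + 1 = (I (s+d)).toNat := by omega
        rw [heq]
        exact ⟨hmem, hA⟩
  -- conclude
  refine ⟨s, by omega, ?_⟩
  have hchain := chain (e' - s) (by omega)
  have hse : s + (e' - s) = e' := by omega
  rw [hse] at hchain
  have hIe'nat : (I e').toNat = L - 1 := by omega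
  rw [hIe'nat] at hchain
  have hB : x ∈ sassK A T γ ᾱ αmax L s ((e' - s) + 1) := by
    simp only [sassK]
    right
    refine ⟨⟨?_, ?_⟩, ?_⟩
    · exact hchain
    · show A (s + (e'-s) + 1) x = γ * A (s + (e'-s)) x
      rw [hse]
      exact hstepe.2
    · show s + (e' - s) < T x
      rw [hse]
      have : e' + 1 ≤ k := by omega
      omega
  exact sassK_mono (by omega) hB

end SASSRecon

open MeasureTheory ProbabilityTheory

set_option maxHeartbeats 1600000 in
/-- High-probability total sample complexity of SASS: with
`oc(α) = c₀ + c₁/(min{τ, κ·α})²`, `τ ≥ κ·ᾱ`, `μ(T > n) ≤ η`, `0 < β ≤ 1/2` and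
`γ ≥ max{1/2, (1/(2q))^{log(2β)/((1+ω)·log n)}}`, with probability at least
`1 − η − n^{−ω} − c·n^{−(1+ω)}` we have `T ≤ n` and
`TOC(T) ≤ n·(c₀ + c₁/(κ·β·ᾱ)²)`. -/
theorem stmt_17
    {Ω : Type*} [mΩ : MeasurableSpace Ω] (μ : Measure Ω) [IsProbabilityMeasure μ]
    (F : Filtration ℕ mΩ)
    (γ ᾱ p q : ℝ) (hγ0 : 0 < γ) (hγ1 : γ < 1) (hᾱ : 0 < ᾱ)
    (hp : 1/2 < p) (hp1 : p < 1) (hq : q = 1 - p)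
    (αmax : ℝ) (j' : ℤ) (hj' : j' ≤ 0) (hαmax : αmax = ᾱ * γ ^ j')
    (A : ℕ → Ω → ℝ) (hadp : Adapted F A) (hpos : ∀ k x, 0 < A k x)
    (T : Ω → ℕ) (hT : IsStoppingTime F (fun x => (T x : WithTop ℕ)))
    (j : ℤ) (hj : j ≤ 0) (hA0 : ∀ x, A 0 x = ᾱ * γ ^ j)
    (hstep : ∀ k, ∀ᵐ x ∂μ,
      A (k+1) x = γ * A k x ∨ A (k+1) x = min αmax (γ⁻¹ * A k x))
    (hcond : ∀ k, ∀ᵐ x ∂μ, (k < T x ∧ A k x ≤ ᾱ) →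
      p ≤ (μ[Set.indicator {x' | A (k+1) x' = min αmax (γ⁻¹ * A k x')}
              (fun _ => (1:ℝ)) | F k]) x)
    (c₀ c₁ κ τ : ℝ) (hc₀ : 0 ≤ c₀) (hc₁ : 0 ≤ c₁) (hκ : 0 < κ) (hτ : κ * ᾱ ≤ τ)
    (n : ℕ) (hn : 2 ≤ n)
    (η : ℝ) (hη0 : 0 ≤ η) (hη1 : η ≤ 1) (hTn : μ {x | n < T x} ≤ ENNReal.ofReal η)
    (w : ℝ) (hw : 0 < w) (β : ℝ) (hβ0 : 0 < β) (hβ : β ≤ 1/2)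
    (hγbig : max (1/2) ((1/(2*q)) ^ (Real.log (2*β) / ((1 + w) * Real.log n))) ≤ γ) :
    ENNReal.ofReal (1 - η - (n : ℝ) ^ (-w)
        - (2 * Real.sqrt (p*q) / (1 - 2 * Real.sqrt (p*q))^2) * (n : ℝ) ^ (-(1 + w))) ≤
      μ {x | T x ≤ n ∧
        ∑ k ∈ Finset.Icc 1 (T x), (c₀ + c₁ / (min τ (κ * A k x))^2) ≤
          (n : ℝ) * (c₀ + c₁ / (κ * β * ᾱ)^2)} := by
  have hq0 : 0 < q := by rw [hq]; linarith
  have hp0 : 0 < p := by linarith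
  have h2q1 : 2*q < 1 := by rw [hq]; linarith
  have h2q0 : 0 < 2*q := by linarith
  have hn0 : (0:ℝ) < n := by exact_mod_cast (by omega : 0 < n)
  have hn1 : (1:ℝ) < n := by exact_mod_cast (by omega : 1 < n)
  have hlogn : 0 < Real.log n := Real.log_pos hn1
  have h1w : (0:ℝ) < 1 + w := by linarith
  -- β is strictly below 1/2
  have hβhalf : β < 1/2 := by
    rcases lt_or_eq_of_le hβ with h | h
    · exact h
    · exfalso
      have h2β : 2*β = 1 := by rw [h]; norm_num
      have h1 : (1/(2*q)) ^ (Real.log (2*β) / ((1 + w) * Real.log n)) = 1 := by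
        rw [h2β]; simp [Real.log_one]
      rw [h1] at hγbig
      have := le_trans (le_max_right (1/2 : ℝ) 1) hγbig
      linarith
  have h2β0 : 0 < 2*β := by linarith
  have h2β1 : 2*β < 1 := by linarith
  have hlog2β : Real.log (2*β) < 0 := Real.log_neg h2β0 h2β1
  have hlogβ : Real.log β < 0 := Real.log_neg hβ0 (by linarith)
  have hlogγ : Real.log γ < 0 := Real.log_neg hγ0 hγ1
  have h12q : (1:ℝ) < 1/(2*q) := by rw [lt_div_iff₀ h2q0]; linarith
  have hQpos : 0 < Real.log (1/(2*q)) := Real.log_pos h12q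
  have hlog2q : Real.log (2*q) = -Real.log (1/(2*q)) := by
    rw [one_div, Real.log_inv]; ring
  -- consequence of the lower bound on γ
  have hγb : Real.log (2*β) / ((1+w) * Real.log n) * Real.log (1/(2*q)) ≤ Real.log γ := by
    have h1 : (1/(2*q)) ^ (Real.log (2*β)/((1+w)*Real.log n)) ≤ γ :=
      le_trans (le_max_right _ _) hγbig
    have h2 := (Real.log_le_log_iff
      (Real.rpow_pos_of_pos (by positivity) _) hγ0).mpr h1
    rwa [Real.log_rpow (by positivity)] at h2
  -- the level L
  set L : ℕ := ⌊Real.log β / Real.log γ⌋₊ + 1 with hLdef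
  have hL1 : 1 ≤ L := by omega
  have hfl_nonneg : 0 ≤ Real.log β / Real.log γ :=
    div_nonneg_of_nonpos hlogβ.le hlogγ.le
  have hfloor_le : (⌊Real.log β / Real.log γ⌋₊ : ℝ) ≤ Real.log β / Real.log γ :=
    Nat.floor_le hfl_nonneg
  have hfloor_gt : Real.log β / Real.log γ < (L:ℝ) := by
    rw [hLdef]; push_cast; exact Nat.lt_floor_add_one _
  have hLβ : ∀ m : ℤ, m < (L:ℤ) → β ≤ γ ^ m := by
    intro m hm
    have h2 : Real.log β ≤ (⌊Real.log β / Real.log γ⌋₊ : ℝ) * Real.log γ := by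
      have h3 := mul_le_mul_of_nonpos_right hfloor_le hlogγ.le
      rw [div_mul_cancel₀ _ (ne_of_lt hlogγ)] at h3
      linarith
    have h1 : β ≤ γ ^ ((⌊Real.log β / Real.log γ⌋₊ : ℕ) : ℤ) := by
      rw [zpow_natCast]
      calc β = Real.exp (Real.log β) := (Real.exp_log hβ0).symm
        _ ≤ Real.exp ((⌊Real.log β / Real.log γ⌋₊ : ℝ) * Real.log γ) :=
            Real.exp_le_exp.mpr h2
        _ = γ ^ ((⌊Real.log β / Real.log γ⌋₊ : ℕ) : ℝ) := by
            rw [Real.rpow_def_of_pos hγ0, mul_comm]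
        _ = γ ^ (⌊Real.log β / Real.log γ⌋₊ : ℕ) := Real.rpow_natCast γ _
    have h3 : γ ^ ((L:ℤ) - 1) ≤ γ ^ m :=
      (zpow_right_strictAnti₀ hγ0 hγ1).antitone (by omega)
    have h4 : ((L:ℤ) - 1) = ((⌊Real.log β / Real.log γ⌋₊ : ℕ) : ℤ) := by
      rw [hLdef]; push_cast; ring
    rw [h4] at h3
    exact le_trans h1 h3
  -- the key exponent inequality
  have hclaim1 : (1+w) * Real.log n ≤ (L:ℝ) * Real.log (1/(2*q)) := by
    have h3 : Real.log (2*β) * Real.log (1/(2*q)) ≤ Real.log γ * ((1+w) * Real.log n) := by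
      have h1 := hγb
      rw [div_mul_eq_mul_div] at h1
      exact (div_le_iff₀ (by positivity)).mp h1
    have h4 : Real.log β * Real.log (1/(2*q)) ≤ Real.log (2*β) * Real.log (1/(2*q)) :=
      mul_le_mul_of_nonneg_right
        ((Real.log_le_log_iff hβ0 h2β0).mpr (by linarith)) hQpos.le
    have h5 : (L:ℝ) * Real.log γ < Real.log β := by
      have h6 := mul_lt_mul_of_neg_right hfloor_gt hlogγ
      rw [div_mul_cancel₀ _ (ne_of_lt hlogγ)] at h6
      linarith
    have h6 : (L:ℝ) * Real.log γ * Real.log (1/(2*q))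
        ≤ Real.log γ * ((1+w) * Real.log n) := by
      calc (L:ℝ) * Real.log γ * Real.log (1/(2*q))
          ≤ Real.log β * Real.log (1/(2*q)) :=
            mul_le_mul_of_nonneg_right h5.le hQpos.le
        _ ≤ Real.log (2*β) * Real.log (1/(2*q)) := h4
        _ ≤ Real.log γ * ((1+w) * Real.log n) := h3
    by_contra hcon
    push_neg at hcon
    have h7 := mul_lt_mul_of_neg_left hcon hlogγ
    nlinarith [h6, h7]
  have h2qL : (2*q)^L ≤ (n:ℝ)^(-(1+w)) := by
    have he1 : (2*q)^L = Real.exp (Real.log (2*q) * (L:ℝ)) := by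
      rw [← Real.rpow_natCast (2*q) L, Real.rpow_def_of_pos h2q0]
    have he2 : (n:ℝ)^(-(1+w)) = Real.exp (Real.log n * (-(1+w))) :=
      Real.rpow_def_of_pos hn0 _
    rw [he1, he2]
    apply Real.exp_le_exp.mpr
    rw [hlog2q]
    nlinarith [hclaim1]
  have hqpL : (q/p)^L ≤ (2*q)^L := by
    apply pow_le_pow_left₀ (by positivity)
    rw [div_le_iff₀ hp0]
    nlinarith
  -- per-start-time bound on the absorption sets
  have hKb : ∀ s : ℕ, (μ (sassK A T γ ᾱ αmax L s (n - s))).toReal ≤ (2*q)^L := by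
    intro s
    have hpot := sass_pot μ F hγ0 hγ1 hᾱ hp hp1 hq hj' hαmax hadp hT hcond L s hL1 (n - s)
    have hsumnn : 0 ≤ ∑ i ∈ Finset.range L,
        (p/q)^i * (μ (sassH A T γ ᾱ αmax L s (n-s) i)).toReal :=
      Finset.sum_nonneg fun i _ => mul_nonneg (by positivity) ENNReal.toReal_nonneg
    have h1 : (p/q)^L * (μ (sassK A T γ ᾱ αmax L s (n-s))).toReal ≤ 1 := by linarith
    have hrL : 0 < (p/q)^L := pow_pos (div_pos hp0 hq0) L
    have h2 : (μ (sassK A T γ ᾱ αmax L s (n-s))).toReal ≤ (q/p)^L := by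
      have heq : (q/p)^L = 1 / (p/q)^L := by rw [one_div, ← inv_pow, inv_div]
      rw [heq, le_div_iff₀ hrL]
      linarith [h1, mul_comm ((p/q)^L) ((μ (sassK A T γ ᾱ αmax L s (n-s))).toReal)]
    exact le_trans h2 hqpL
  have hAm : ∀ t, Measurable (A t) := fun t => Measurable.mono (hadp t) (F.le t) le_rfl
  -- the good event
  set Bad : Set Ω := ⋃ k ∈ Finset.Icc 1 n, ({x | A k x < β*ᾱ} ∩ {x | k ≤ T x}) with hBad
  set Good : Set Ω := {x | T x ≤ n} ∩ Badᶜ with hGood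
  have hBadMeas : MeasurableSet Bad := by
    rw [hBad]
    refine MeasurableSet.iUnion fun k => MeasurableSet.iUnion fun _ => ?_
    exact (measurableSet_lt (hAm k) measurable_const).inter
      ((F.le k) _ (sass_T_le_meas F hT k))
  have hTsetMeas : MeasurableSet {x | T x ≤ n} := (F.le n) _ (by simpa using hT n)
  have hGoodMeas : MeasurableSet Good := hTsetMeas.inter hBadMeas.compl
  -- the good event implies the conclusion event
  have hGoodSub : Good ⊆ {x | T x ≤ n ∧
      ∑ k ∈ Finset.Icc 1 (T x), (c₀ + c₁ / (min τ (κ * A k x))^2) ≤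
        (n : ℝ) * (c₀ + c₁ / (κ * β * ᾱ)^2)} := by
    rintro x ⟨hTx, hxB⟩
    have hTx' : T x ≤ n := hTx
    refine ⟨hTx', ?_⟩
    have hterm : ∀ k ∈ Finset.Icc 1 (T x),
        c₀ + c₁/(min τ (κ * A k x))^2 ≤ c₀ + c₁/(κ*β*ᾱ)^2 := by
      intro k hk
      rw [Finset.mem_Icc] at hk
      have hkn' : k ∈ Finset.Icc 1 n := Finset.mem_Icc.mpr ⟨hk.1, le_trans hk.2 hTx'⟩
      have hA : β*ᾱ ≤ A k x := by
        by_contra hA'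
        push_neg at hA'
        exact hxB (Set.mem_biUnion hkn' ⟨hA', hk.2⟩)
      have hmin : κ*β*ᾱ ≤ min τ (κ * A k x) := by
        apply le_min
        · have hba : κ*β*ᾱ ≤ κ*ᾱ := by
            nlinarith [mul_pos (mul_pos hκ hᾱ) (by linarith : (0:ℝ) < 1 - β)]
          exact le_trans hba hτ
        · calc κ*β*ᾱ = κ*(β*ᾱ) := by ring
            _ ≤ κ * A k x := mul_le_mul_of_nonneg_left hA hκ.le
      have hminpos : 0 < κ*β*ᾱ := by positivity
      have hsq : (κ*β*ᾱ)^2 ≤ (min τ (κ * A k x))^2 := by nlinarith [hmin, hminpos]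
      have hdiv : c₁/(min τ (κ * A k x))^2 ≤ c₁/(κ*β*ᾱ)^2 :=
        div_le_div_of_nonneg_left hc₁ (by positivity) hsq
      linarith
    calc ∑ k ∈ Finset.Icc 1 (T x), (c₀ + c₁/(min τ (κ * A k x))^2)
        ≤ ∑ k ∈ Finset.Icc 1 (T x), (c₀ + c₁/(κ*β*ᾱ)^2) := Finset.sum_le_sum hterm
      _ = (T x : ℝ) * (c₀ + c₁/(κ*β*ᾱ)^2) := by
          rw [Finset.sum_const, Nat.card_Icc, Nat.add_sub_cancel, nsmul_eq_mul]
      _ ≤ (n:ℝ) * (c₀ + c₁/(κ*β*ᾱ)^2) := by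
          have hb0 : 0 ≤ c₀ + c₁/(κ*β*ᾱ)^2 := by positivity
          have : (T x : ℝ) ≤ (n : ℝ) := by exact_mod_cast hTx'
          nlinarith
  -- bound on the bad event
  have hBadBound : μ Bad ≤ ENNReal.ofReal ((n:ℝ)^(-w)) := by
    classical
    set Nbad : Set Ω := {x | ¬ ∀ t, (A (t+1) x = γ * A t x ∨
      A (t+1) x = min αmax (γ⁻¹ * A t x))} with hNbad
    have hNnull : μ Nbad = 0 := by
      have hae : ∀ᵐ x ∂μ, ∀ t, (A (t+1) x = γ * A t x ∨
          A (t+1) x = min αmax (γ⁻¹ * A t x)) := ae_all_iff.mpr hstep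
      exact ae_iff.mp hae
    have hsubU : Bad ⊆ (⋃ s ∈ Finset.range n, sassK A T γ ᾱ αmax L s (n - s)) ∪ Nbad := by
      intro x hx
      by_cases hst : ∀ t, (A (t+1) x = γ * A t x ∨ A (t+1) x = min αmax (γ⁻¹ * A t x))
      · left
        rw [hBad] at hx
        simp only [Set.mem_iUnion, exists_prop, Set.mem_inter_iff, Set.mem_setOf_eq] at hx
        obtain ⟨k, hkmem, hAx, hTx⟩ := hx
        rw [Finset.mem_Icc] at hkmem
        obtain ⟨s, hs, hmem⟩ := sass_recon hγ0 hγ1 hᾱ hj' hαmax hβ0 hL1 hLβ x hst hj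
          (hA0 x) k hkmem.1 hkmem.2 hTx hAx
        simp only [Set.mem_iUnion, exists_prop]
        exact ⟨s, Finset.mem_range.mpr hs, hmem⟩
      · right; exact hst
    calc μ Bad ≤ μ ((⋃ s ∈ Finset.range n, sassK A T γ ᾱ αmax L s (n - s)) ∪ Nbad) :=
          measure_mono hsubU
      _ ≤ μ (⋃ s ∈ Finset.range n, sassK A T γ ᾱ αmax L s (n - s)) + μ Nbad :=
          measure_union_le _ _
      _ = μ (⋃ s ∈ Finset.range n, sassK A T γ ᾱ αmax L s (n - s)) := by
          rw [hNnull, add_zero]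
      _ ≤ ∑ s ∈ Finset.range n, μ (sassK A T γ ᾱ αmax L s (n - s)) :=
          measure_biUnion_finset_le _ _
      _ ≤ ∑ s ∈ Finset.range n, ENNReal.ofReal ((2*q)^L) := by
          apply Finset.sum_le_sum
          intro s _
          calc μ (sassK A T γ ᾱ αmax L s (n - s))
              = ENNReal.ofReal ((μ (sassK A T γ ᾱ αmax L s (n - s))).toReal) :=
                (ENNReal.ofReal_toReal (measure_ne_top μ _)).symm
            _ ≤ ENNReal.ofReal ((2*q)^L) := ENNReal.ofReal_le_ofReal (hKb s)
      _ = (n : ENNReal) * ENNReal.ofReal ((2*q)^L) := by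
          rw [Finset.sum_const, Finset.card_range, nsmul_eq_mul]
      _ = ENNReal.ofReal ((n:ℝ) * (2*q)^L) := by
          rw [ENNReal.ofReal_mul (by positivity : (0:ℝ) ≤ (n:ℝ)), ENNReal.ofReal_natCast]
      _ ≤ ENNReal.ofReal ((n:ℝ)^(-w)) := by
          apply ENNReal.ofReal_le_ofReal
          have hnw : (n:ℝ) * (n:ℝ)^(-(1+w)) = (n:ℝ)^(-w) := by
            have h1 : (n:ℝ) * (n:ℝ)^(-(1+w)) = (n:ℝ)^(1:ℝ) * (n:ℝ)^(-(1+w)) := by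
              rw [Real.rpow_one]
            rw [h1, ← Real.rpow_add hn0]
            norm_num
          calc (n:ℝ) * (2*q)^L ≤ (n:ℝ) * (n:ℝ)^(-(1+w)) :=
                mul_le_mul_of_nonneg_left h2qL hn0.le
            _ = (n:ℝ)^(-w) := hnw
  have hGc : μ Goodᶜ ≤ ENNReal.ofReal (η + (n:ℝ)^(-w)) := by
    have hsub : Goodᶜ ⊆ {x | n < T x} ∪ Bad := by
      intro x hx
      rw [hGood, Set.compl_inter, compl_compl] at hx
      rcases hx with h | h
      · left
        simp only [Set.mem_compl_iff, Set.mem_setOf_eq, not_le] at h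
        exact h
      · right; exact h
    calc μ Goodᶜ ≤ μ ({x | n < T x} ∪ Bad) := measure_mono hsub
      _ ≤ μ {x | n < T x} + μ Bad := measure_union_le _ _
      _ ≤ ENNReal.ofReal η + ENNReal.ofReal ((n:ℝ)^(-w)) := add_le_add hTn hBadBound
      _ = ENNReal.ofReal (η + (n:ℝ)^(-w)) :=
          (ENNReal.ofReal_add hη0 (Real.rpow_nonneg hn0.le _)).symm
  -- final assembly
  have hcterm : 0 ≤ (2 * Real.sqrt (p*q) / (1 - 2 * Real.sqrt (p*q))^2) * (n:ℝ)^(-(1+w)) := by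
    positivity
  have hfirst : ENNReal.ofReal (1 - η - (n : ℝ) ^ (-w)
        - (2 * Real.sqrt (p*q) / (1 - 2 * Real.sqrt (p*q))^2) * (n : ℝ) ^ (-(1 + w)))
      ≤ ENNReal.ofReal (1 - (η + (n:ℝ)^(-w))) := ENNReal.ofReal_le_ofReal (by linarith)
  refine le_trans hfirst (le_trans ?_ (measure_mono hGoodSub))
  rcases le_or_gt (1 - (η + (n:ℝ)^(-w))) 0 with h | h
  · rw [ENNReal.ofReal_eq_zero.mpr h]; exact zero_le
  · have hs0nn : 0 ≤ η + (n:ℝ)^(-w) := add_nonneg hη0 (Real.rpow_nonneg hn0.le _)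
    have hsum : ENNReal.ofReal (1 - (η + (n:ℝ)^(-w))) + ENNReal.ofReal (η + (n:ℝ)^(-w)) = 1 := by
      rw [← ENNReal.ofReal_add (by linarith) hs0nn]
      norm_num
    have hc := measure_add_measure_compl (μ := μ) hGoodMeas
    rw [measure_univ] at hc
    have h2 : ENNReal.ofReal (1 - (η + (n:ℝ)^(-w))) + ENNReal.ofReal (η + (n:ℝ)^(-w))
        ≤ μ Good + ENNReal.ofReal (η + (n:ℝ)^(-w)) := by
      rw [hsum, ← hc]
      exact add_le_add_right hGc _
    exact (ENNReal.add_le_add_iff_right ENNReal.ofReal_ne_top).mp h2
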